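/- Let M = [[−a, A₁₂],[A₁₂ᵀ, A₂₂]] with A₂₂ invertible, K = [[−a, B₁₂],[B₁₂ᵀ, B₂₂]] with B₂₂ invertible, and let g = (−a − B₁₂ B₂₂^{-1} B₁₂ᵀ) be the scalar reciprocal Cauchy transform of K. Consider the matrix C obtained from M by attaching K at vertex 1: C = [[−a, A₁₂, B₁₂],[A₁₂ᵀ, A₂₂, 0],[B₁₂ᵀ, 0, B₂₂]]. Then the Schur complement of C onto its first 1+m block equals the matrix M with its (1,1) entry −a replaced by g; in particular (C^{-1})_{11} = (M')^{-1}_{11} where M' = [[g, A₁₂],[A₁₂ᵀ, A₂₂]], assuming the relevant matrices are invertible. -/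

import Mathlib

/-- Graph retraction: attaching `K = [[-a, B₁₂],[B₁₂ᵀ, B₂₂]]` to the matrix
`M = [[-a, A₁₂],[A₁₂ᵀ, A₂₂]]` at vertex 1 yields `C` whose Schur complement onto the
first block is `M'`, the matrix `M` with `(1,1)` entry replaced by the reciprocal
Cauchy transform `g` of `K`; in particular `(C⁻¹)₁₁ = (M'⁻¹)₁₁`. -/
theorem stmt_7 (m k : ℕ) (a : ℂ)
    (A12 : Matrix (Fin 1) (Fin m) ℂ) (A22 : Matrix (Fin m) (Fin m) ℂ) (hA22 : IsUnit A22)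
    (B12 : Matrix (Fin 1) (Fin k) ℂ) (B22 : Matrix (Fin k) (Fin k) ℂ) (hB22 : IsUnit B22)
    (g : ℂ) (hg : g = -a - (B12 * B22⁻¹ * B12.transpose) 0 0)
    (M M' : Matrix (Fin 1 ⊕ Fin m) (Fin 1 ⊕ Fin m) ℂ)
    (hMdef : M = Matrix.fromBlocks (Matrix.of fun _ _ => -a) A12 A12.transpose A22)
    (hM'def : M' = Matrix.fromBlocks (Matrix.of fun _ _ => g) A12 A12.transpose A22)
    (C : Matrix ((Fin 1 ⊕ Fin m) ⊕ Fin k) ((Fin 1 ⊕ Fin m) ⊕ Fin k) ℂ)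
    (hCdef : C = Matrix.fromBlocks M (Matrix.fromRows B12 0)
      (Matrix.fromCols B12.transpose 0) B22) :
    M - Matrix.fromRows B12 0 * B22⁻¹ * Matrix.fromCols B12.transpose 0 = M' ∧
      (IsUnit C → IsUnit M' →
        (C⁻¹) (Sum.inl (Sum.inl 0)) (Sum.inl (Sum.inl 0)) = (M'⁻¹) (Sum.inl 0) (Sum.inl 0)) := by
  have hprod : Matrix.fromRows B12 (0 : Matrix (Fin m) (Fin k) ℂ) * B22⁻¹ *
        Matrix.fromCols B12.transpose (0 : Matrix (Fin k) (Fin m) ℂ)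
      = Matrix.fromBlocks (B12 * B22⁻¹ * B12.transpose) (0 : Matrix (Fin 1) (Fin m) ℂ)
        (0 : Matrix (Fin m) (Fin 1) ℂ) (0 : Matrix (Fin m) (Fin m) ℂ) := by
    rw [Matrix.fromRows_mul, Matrix.fromRows_mul_fromCols]
    simp [Matrix.fromBlocks]
  have hschur : M - Matrix.fromRows B12 0 * B22⁻¹ * Matrix.fromCols B12.transpose 0 = M' := by
    rw [hprod, hMdef, hM'def]
    ext i j
    rcases i with i | i <;> rcases j with j | j
    · fin_cases i; fin_cases j; simp [hg]
    all_goals simp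
  refine ⟨hschur, fun hC hM' => ?_⟩
  haveI : Invertible B22 := hB22.invertible
  haveI : Invertible C := hC.invertible
  haveI : Invertible M' := hM'.invertible
  have hinvB : ⅟B22 = B22⁻¹ := Matrix.invOf_eq_nonsing_inv B22
  have hschur' : M - Matrix.fromRows B12 0 * ⅟B22 * Matrix.fromCols B12.transpose 0 = M' := by
    rw [hinvB]; exact hschur
  haveI : Invertible (M - Matrix.fromRows B12 0 * ⅟B22 * Matrix.fromCols B12.transpose 0) :=
    hschur' ▸ (inferInstance : Invertible M')
  haveI : Invertible (Matrix.fromBlocks M (Matrix.fromRows B12 0)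
      (Matrix.fromCols B12.transpose 0) B22) := hCdef ▸ (inferInstance : Invertible C)
  have hblock := Matrix.invOf_fromBlocks₂₂_eq M (Matrix.fromRows B12 0)
    (Matrix.fromCols B12.transpose 0) B22
  rw [hCdef, ← Matrix.invOf_eq_nonsing_inv, hblock, Matrix.fromBlocks_apply₁₁,
    Matrix.invOf_eq_nonsing_inv, hschur']
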